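/- There exist finite-alphabet random variables X_1, X_2, X_3 whose entropy vector h ∈ ℝ^7 satisfies all of the following: (i) h is a nonnegative linear combination of e_1, e_2, e_3, e_{12}, e_{123'}; (ii) h is not a nonnegative linear combination of any proper subset of {e_1, e_2, e_3, e_{12}, e_{123'}}; and (iii) there is no choice of λ_1, λ_2, λ_3, λ_{12}, λ_{123'} ≥ 0 with h = λ_1·e_1 + λ_2·e_2 + λ_3·e_3 + λ_{12}·e_{12} + λ_{123'}·e_{123'} such that either λ_{12} + λ_{123'} ≥ log₂ ⌈2^{λ_{123'}}⌉ or λ_{123'} = log₂ m for some positive integer m. -/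

import Mathlib

open Finset

/-- Probability that the discrete random variable `X` (on finite sample space `Fin N`
with probability mass function `p`) takes the value `a`. -/
noncomputable def pr {N : ℕ} (p : Fin N → ℝ) {A : Type} [DecidableEq A]
    (X : Fin N → A) (a : A) : ℝ :=
  ∑ ω, if X ω = a then p ω else 0

/-- Base-2 Shannon entropy of the random variable `X` under the pmf `p`. -/
noncomputable def ent {N : ℕ} (p : Fin N → ℝ) {A : Type} [Fintype A] [DecidableEq A]
    (X : Fin N → A) : ℝ :=
  -∑ a, pr p X a * Real.logb 2 (pr p X a)

/-- `p` is a probability mass function. -/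
def IsDist {N : ℕ} (p : Fin N → ℝ) : Prop :=
  (∀ ω, 0 ≤ p ω) ∧ ∑ ω, p ω = 1

/-- The entropy vector of three finite-alphabet random variables, with components
(H(X₁), H(X₂), H(X₃), H(X₁X₂), H(X₁X₃), H(X₂X₃), H(X₁X₂X₃)). -/
noncomputable def entVec3 {N a₁ a₂ a₃ : ℕ} (p : Fin N → ℝ)
    (X₁ : Fin N → Fin a₁) (X₂ : Fin N → Fin a₂) (X₃ : Fin N → Fin a₃) : Fin 7 → ℝ :=
  ![ent p X₁, ent p X₂, ent p X₃,
    ent p (fun ω => (X₁ ω, X₂ ω)),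
    ent p (fun ω => (X₁ ω, X₃ ω)),
    ent p (fun ω => (X₂ ω, X₃ ω)),
    ent p (fun ω => (X₁ ω, X₂ ω, X₃ ω))]

/-- `h ∈ ℝ⁷` is the entropy vector of some triple of finite-alphabet random variables. -/
def IsEntropic (h : Fin 7 → ℝ) : Prop :=
  ∃ (N a₁ a₂ a₃ : ℕ) (p : Fin N → ℝ)
    (X₁ : Fin N → Fin a₁) (X₂ : Fin N → Fin a₂) (X₃ : Fin N → Fin a₃),
    IsDist p ∧ entVec3 p X₁ X₂ X₃ = h

noncomputable def e1 : Fin 7 → ℝ := ![1,0,0,1,1,0,1]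
noncomputable def e2 : Fin 7 → ℝ := ![0,1,0,1,0,1,1]
noncomputable def e3 : Fin 7 → ℝ := ![0,0,1,0,1,1,1]
noncomputable def e12 : Fin 7 → ℝ := ![1,1,0,1,1,1,1]
noncomputable def e13 : Fin 7 → ℝ := ![1,0,1,1,1,1,1]
noncomputable def e23 : Fin 7 → ℝ := ![0,1,1,1,1,1,1]
noncomputable def e123 : Fin 7 → ℝ := ![1,1,1,1,1,1,1]
noncomputable def e123' : Fin 7 → ℝ := ![1,1,1,2,2,2,2]

noncomputable def myp : Fin 8 → ℝ := ![1/4,1/8,0,1/8,0,1/8,1/4,1/8]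
def Y1 : Fin 8 → Fin 2 := ![0,0,0,0,1,1,1,1]
def Y2 : Fin 8 → Fin 2 := ![0,0,1,1,0,0,1,1]
def Y3 : Fin 8 → Fin 2 := ![0,1,0,1,0,1,0,1]

lemma lb_half : Real.logb 2 (1/2) = -1 := by
  rw [show (1/2:ℝ) = 2⁻¹ by norm_num, Real.logb_inv, Real.logb_self_eq_one] <;> norm_num

lemma lb_quarter : Real.logb 2 (1/4) = -2 := by
  rw [show (1/4:ℝ) = ((2:ℝ)^(2:ℕ))⁻¹ by norm_num, Real.logb_inv, Real.logb_pow,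
    Real.logb_self_eq_one] <;> norm_num

lemma lb_eighth : Real.logb 2 (1/8) = -3 := by
  rw [show (1/8:ℝ) = ((2:ℝ)^(3:ℕ))⁻¹ by norm_num, Real.logb_inv, Real.logb_pow,
    Real.logb_self_eq_one] <;> norm_num

lemma lb_38 : Real.logb 2 (3/8) = Real.logb 2 3 - 3 := by
  rw [show (3/8:ℝ) = 3 * (1/8) by norm_num, Real.logb_mul (by norm_num) (by norm_num), lb_eighth]
  ring

lemma L_gt : 3/2 < Real.logb 2 3 := by
  have h : (3:ℝ) * Real.log 2 < 2 * Real.log 3 := by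
    have := Real.log_lt_log (by norm_num : (0:ℝ) < 8) (by norm_num : (8:ℝ) < 9)
    rw [show (8:ℝ) = 2^(3:ℕ) by norm_num, show (9:ℝ) = 3^(2:ℕ) by norm_num,
      Real.log_pow, Real.log_pow] at this
    push_cast at this; linarith
  have h2 : (0:ℝ) < Real.log 2 := Real.log_pos (by norm_num)
  rw [Real.logb, lt_div_iff₀ h2]; linarith

lemma L_lt : Real.logb 2 3 < 8/5 := by
  have h : (5:ℝ) * Real.log 3 < 8 * Real.log 2 := by
    have := Real.log_lt_log (by norm_num : (0:ℝ) < 243) (by norm_num : (243:ℝ) < 256)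
    rw [show (243:ℝ) = 3^(5:ℕ) by norm_num, show (256:ℝ) = 2^(8:ℕ) by norm_num,
      Real.log_pow, Real.log_pow] at this
    push_cast at this; linarith
  have h2 : (0:ℝ) < Real.log 2 := Real.log_pos (by norm_num)
  rw [Real.logb, div_lt_iff₀ h2]; linarith

lemma ent1 : ent myp Y1 = 1 := by
  have h0 : pr myp Y1 0 = 1/2 := by norm_num [pr, Fin.sum_univ_succ, myp, Y1]
  have h1 : pr myp Y1 1 = 1/2 := by norm_num [pr, Fin.sum_univ_succ, myp, Y1]
  rw [ent, Fin.sum_univ_two, h0, h1, lb_half]; ring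

lemma ent2 : ent myp Y2 = 1 := by
  have h0 : pr myp Y2 0 = 1/2 := by norm_num [pr, Fin.sum_univ_succ, myp, Y2]
  have h1 : pr myp Y2 1 = 1/2 := by norm_num [pr, Fin.sum_univ_succ, myp, Y2]
  rw [ent, Fin.sum_univ_two, h0, h1, lb_half]; ring

lemma ent3 : ent myp Y3 = 1 := by
  have h0 : pr myp Y3 0 = 1/2 := by norm_num [pr, Fin.sum_univ_succ, myp, Y3]
  have h1 : pr myp Y3 1 = 1/2 := by norm_num [pr, Fin.sum_univ_succ, myp, Y3]
  rw [ent, Fin.sum_univ_two, h0, h1, lb_half]; ring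

lemma ent12 : ent myp (fun ω => (Y1 ω, Y2 ω)) = 3 - (3/4) * Real.logb 2 3 := by
  have h00 : pr myp (fun ω => (Y1 ω, Y2 ω)) (0,0) = 3/8 := by
    norm_num [pr, Fin.sum_univ_succ, myp, Y1, Y2]
  have h01 : pr myp (fun ω => (Y1 ω, Y2 ω)) (0,1) = 1/8 := by
    norm_num [pr, Fin.sum_univ_succ, myp, Y1, Y2]
  have h10 : pr myp (fun ω => (Y1 ω, Y2 ω)) (1,0) = 1/8 := by
    norm_num [pr, Fin.sum_univ_succ, myp, Y1, Y2]
  have h11 : pr myp (fun ω => (Y1 ω, Y2 ω)) (1,1) = 3/8 := by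
    norm_num [pr, Fin.sum_univ_succ, myp, Y1, Y2]
  rw [ent]
  simp only [Fintype.sum_prod_type, Fin.sum_univ_two]
  rw [h00, h01, h10, h11, lb_38, lb_eighth]; ring

lemma ent13 : ent myp (fun ω => (Y1 ω, Y3 ω)) = 2 := by
  have h00 : pr myp (fun ω => (Y1 ω, Y3 ω)) (0,0) = 1/4 := by
    norm_num [pr, Fin.sum_univ_succ, myp, Y1, Y3]
  have h01 : pr myp (fun ω => (Y1 ω, Y3 ω)) (0,1) = 1/4 := by
    norm_num [pr, Fin.sum_univ_succ, myp, Y1, Y3]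
  have h10 : pr myp (fun ω => (Y1 ω, Y3 ω)) (1,0) = 1/4 := by
    norm_num [pr, Fin.sum_univ_succ, myp, Y1, Y3]
  have h11 : pr myp (fun ω => (Y1 ω, Y3 ω)) (1,1) = 1/4 := by
    norm_num [pr, Fin.sum_univ_succ, myp, Y1, Y3]
  rw [ent]
  simp only [Fintype.sum_prod_type, Fin.sum_univ_two]
  rw [h00, h01, h10, h11, lb_quarter]; ring

lemma ent23 : ent myp (fun ω => (Y2 ω, Y3 ω)) = 2 := by
  have h00 : pr myp (fun ω => (Y2 ω, Y3 ω)) (0,0) = 1/4 := by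
    norm_num [pr, Fin.sum_univ_succ, myp, Y2, Y3]
  have h01 : pr myp (fun ω => (Y2 ω, Y3 ω)) (0,1) = 1/4 := by
    norm_num [pr, Fin.sum_univ_succ, myp, Y2, Y3]
  have h10 : pr myp (fun ω => (Y2 ω, Y3 ω)) (1,0) = 1/4 := by
    norm_num [pr, Fin.sum_univ_succ, myp, Y2, Y3]
  have h11 : pr myp (fun ω => (Y2 ω, Y3 ω)) (1,1) = 1/4 := by
    norm_num [pr, Fin.sum_univ_succ, myp, Y2, Y3]
  rw [ent]
  simp only [Fintype.sum_prod_type, Fin.sum_univ_two]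
  rw [h00, h01, h10, h11, lb_quarter]; ring

lemma ent123 : ent myp (fun ω => (Y1 ω, Y2 ω, Y3 ω)) = 5/2 := by
  have h000 : pr myp (fun ω => (Y1 ω, Y2 ω, Y3 ω)) (0,0,0) = 1/4 := by
    norm_num [pr, Fin.sum_univ_succ, myp, Y1, Y2, Y3]
  have h001 : pr myp (fun ω => (Y1 ω, Y2 ω, Y3 ω)) (0,0,1) = 1/8 := by
    norm_num [pr, Fin.sum_univ_succ, myp, Y1, Y2, Y3]
  have h010 : pr myp (fun ω => (Y1 ω, Y2 ω, Y3 ω)) (0,1,0) = 0 := by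
    norm_num [pr, Fin.sum_univ_succ, myp, Y1, Y2, Y3]
  have h011 : pr myp (fun ω => (Y1 ω, Y2 ω, Y3 ω)) (0,1,1) = 1/8 := by
    norm_num [pr, Fin.sum_univ_succ, myp, Y1, Y2, Y3]
  have h100 : pr myp (fun ω => (Y1 ω, Y2 ω, Y3 ω)) (1,0,0) = 0 := by
    norm_num [pr, Fin.sum_univ_succ, myp, Y1, Y2, Y3]
  have h101 : pr myp (fun ω => (Y1 ω, Y2 ω, Y3 ω)) (1,0,1) = 1/8 := by
    norm_num [pr, Fin.sum_univ_succ, myp, Y1, Y2, Y3]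
  have h110 : pr myp (fun ω => (Y1 ω, Y2 ω, Y3 ω)) (1,1,0) = 1/4 := by
    norm_num [pr, Fin.sum_univ_succ, myp, Y1, Y2, Y3]
  have h111 : pr myp (fun ω => (Y1 ω, Y2 ω, Y3 ω)) (1,1,1) = 1/8 := by
    norm_num [pr, Fin.sum_univ_succ, myp, Y1, Y2, Y3]
  rw [ent]
  simp only [Fintype.sum_prod_type, Fin.sum_univ_two]
  rw [h000, h001, h010, h011, h100, h101, h110, h111, lb_quarter, lb_eighth]
  simp; ring

lemma hvec : entVec3 myp Y1 Y2 Y3 =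
    ![1, 1, 1, 3 - (3/4) * Real.logb 2 3, 2, 2, 5/2] := by
  rw [entVec3, ent1, ent2, ent3, ent12, ent13, ent23, ent123]

/-- The coefficients are pinned down by the linear system. -/
lemma coeffs_unique (c1 c2 c3 c12 c123 : ℝ)
    (heq : entVec3 myp Y1 Y2 Y3 =
      c1 • e1 + c2 • e2 + c3 • e3 + c12 • e12 + c123 • e123') :
    c1 = 1/2 ∧ c2 = 1/2 ∧ c3 = (3/4) * Real.logb 2 3 - 1/2 ∧
    c12 = (3/4) * Real.logb 2 3 - 1 ∧ c123 = 3/2 - (3/4) * Real.logb 2 3 := by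
  rw [hvec] at heq
  have h0 : (1:ℝ) = c1*1 + c2*0 + c3*0 + c12*1 + c123*1 := congrFun heq 0
  have h1 : (1:ℝ) = c1*0 + c2*1 + c3*0 + c12*1 + c123*1 := congrFun heq 1
  have h2 : (1:ℝ) = c1*0 + c2*0 + c3*1 + c12*0 + c123*1 := congrFun heq 2
  have h3 : (3 - (3/4) * Real.logb 2 3 : ℝ) = c1*1 + c2*1 + c3*0 + c12*1 + c123*2 :=
    congrFun heq 3
  have h4 : (2:ℝ) = c1*1 + c2*0 + c3*1 + c12*1 + c123*2 := congrFun heq 4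
  have h5 : (2:ℝ) = c1*0 + c2*1 + c3*1 + c12*1 + c123*2 := congrFun heq 5
  have h6 : (5/2:ℝ) = c1*1 + c2*1 + c3*1 + c12*1 + c123*2 := congrFun heq 6
  refine ⟨by linarith, by linarith, by linarith, by linarith, by linarith⟩


/-- There exist finite-alphabet random variables whose entropy vector h is (i) a
nonnegative combination of e₁,e₂,e₃,e₁₂,e₁₂₃'; (ii) not a nonnegative combination of
any proper subset of {e₁,e₂,e₃,e₁₂,e₁₂₃'}; (iii) admits no nonnegative representation
with either λ₁₂+λ₁₂₃' ≥ log₂⌈2^{λ₁₂₃'}⌉ or λ₁₂₃' = log₂ m for a positive integer m. -/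
theorem stmt15 :
    ∃ (N a₁ a₂ a₃ : ℕ) (p : Fin N → ℝ)
      (X₁ : Fin N → Fin a₁) (X₂ : Fin N → Fin a₂) (X₃ : Fin N → Fin a₃),
      IsDist p ∧
      (∃ c1 c2 c3 c12 c123 : ℝ, 0 ≤ c1 ∧ 0 ≤ c2 ∧ 0 ≤ c3 ∧ 0 ≤ c12 ∧ 0 ≤ c123 ∧
        entVec3 p X₁ X₂ X₃ =
          c1 • e1 + c2 • e2 + c3 • e3 + c12 • e12 + c123 • e123') ∧
      (∀ c1 c2 c3 c12 c123 : ℝ, 0 ≤ c1 → 0 ≤ c2 → 0 ≤ c3 → 0 ≤ c12 → 0 ≤ c123 →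
        entVec3 p X₁ X₂ X₃ =
          c1 • e1 + c2 • e2 + c3 • e3 + c12 • e12 + c123 • e123' →
        c1 ≠ 0 ∧ c2 ≠ 0 ∧ c3 ≠ 0 ∧ c12 ≠ 0 ∧ c123 ≠ 0) ∧
      ¬∃ l1 l2 l3 l12 l : ℝ, 0 ≤ l1 ∧ 0 ≤ l2 ∧ 0 ≤ l3 ∧ 0 ≤ l12 ∧ 0 ≤ l ∧
        entVec3 p X₁ X₂ X₃ =
          l1 • e1 + l2 • e2 + l3 • e3 + l12 • e12 + l • e123' ∧
        (l12 + l ≥ Real.logb 2 ((⌈(2:ℝ) ^ l⌉ : ℤ) : ℝ) ∨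
         ∃ m : ℕ, 0 < m ∧ l = Real.logb 2 (m : ℝ)) := by
  refine ⟨8, 2, 2, 2, myp, Y1, Y2, Y3, ?_, ?_, ?_, ?_⟩
  · constructor
    · intro ω; fin_cases ω <;> norm_num [myp]
    · norm_num [Fin.sum_univ_succ, myp]
  · refine ⟨1/2, 1/2, (3/4) * Real.logb 2 3 - 1/2, (3/4) * Real.logb 2 3 - 1,
      3/2 - (3/4) * Real.logb 2 3, by norm_num, by norm_num, by nlinarith [L_gt],
      by nlinarith [L_gt], by nlinarith [L_lt], ?_⟩
    rw [hvec]
    funext i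
    fin_cases i
    · show (1:ℝ) = (1/2)*1 + (1/2)*0 + ((3/4)*Real.logb 2 3 - 1/2)*0 +
        ((3/4)*Real.logb 2 3 - 1)*1 + (3/2 - (3/4)*Real.logb 2 3)*1
      ring
    · show (1:ℝ) = (1/2)*0 + (1/2)*1 + ((3/4)*Real.logb 2 3 - 1/2)*0 +
        ((3/4)*Real.logb 2 3 - 1)*1 + (3/2 - (3/4)*Real.logb 2 3)*1
      ring
    · show (1:ℝ) = (1/2)*0 + (1/2)*0 + ((3/4)*Real.logb 2 3 - 1/2)*1 +
        ((3/4)*Real.logb 2 3 - 1)*0 + (3/2 - (3/4)*Real.logb 2 3)*1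
      ring
    · show (3 - (3/4) * Real.logb 2 3 : ℝ) = (1/2)*1 + (1/2)*1 + ((3/4)*Real.logb 2 3 - 1/2)*0 +
        ((3/4)*Real.logb 2 3 - 1)*1 + (3/2 - (3/4)*Real.logb 2 3)*2
      ring
    · show (2:ℝ) = (1/2)*1 + (1/2)*0 + ((3/4)*Real.logb 2 3 - 1/2)*1 +
        ((3/4)*Real.logb 2 3 - 1)*1 + (3/2 - (3/4)*Real.logb 2 3)*2
      ring
    · show (2:ℝ) = (1/2)*0 + (1/2)*1 + ((3/4)*Real.logb 2 3 - 1/2)*1 +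
        ((3/4)*Real.logb 2 3 - 1)*1 + (3/2 - (3/4)*Real.logb 2 3)*2
      ring
    · show (5/2:ℝ) = (1/2)*1 + (1/2)*1 + ((3/4)*Real.logb 2 3 - 1/2)*1 +
        ((3/4)*Real.logb 2 3 - 1)*1 + (3/2 - (3/4)*Real.logb 2 3)*2
      ring
  · intro c1 c2 c3 c12 c123 _ _ _ _ _ heq
    obtain ⟨r1, r2, r3, r12, r123⟩ := coeffs_unique c1 c2 c3 c12 c123 heq
    have hg := L_gt
    have hl := L_lt
    refine ⟨by rw [r1]; norm_num, by rw [r2]; norm_num, ?_, ?_, ?_⟩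
    · rw [r3]; nlinarith
    · rw [r12]; nlinarith
    · rw [r123]; nlinarith
  · rintro ⟨l1, l2, l3, l12, l, _, _, _, _, _, heq, hdisj⟩
    obtain ⟨r1, r2, r3, r12, r123⟩ := coeffs_unique l1 l2 l3 l12 l heq
    have hg := L_gt
    have hl := L_lt
    have hl0 : 3/10 < l := by rw [r123]; nlinarith
    have hl1 : l < 3/8 := by rw [r123]; nlinarith
    rcases hdisj with h | ⟨m, hm, hml⟩
    · have hceil : ⌈(2:ℝ) ^ l⌉ = 2 := by
        rw [Int.ceil_eq_iff]
        constructor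
        · have : (2:ℝ) ^ (0:ℝ) < (2:ℝ) ^ l :=
            Real.rpow_lt_rpow_left_iff (by norm_num) |>.mpr (by linarith)
          rw [Real.rpow_zero] at this
          push_cast; linarith
        · have : (2:ℝ) ^ l < (2:ℝ) ^ (1:ℝ) :=
            Real.rpow_lt_rpow_left_iff (by norm_num) |>.mpr (by linarith)
          rw [Real.rpow_one] at this
          push_cast; linarith
      rw [hceil] at h
      have : Real.logb 2 ((2:ℤ):ℝ) = 1 := by
        norm_num [Real.logb_self_eq_one]
      rw [this] at h
      have : l12 + l = 1/2 := by rw [r12, r123]; ring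
      linarith
    · rcases eq_or_lt_of_le (show 1 ≤ m from hm) with h1 | h2
      · rw [← h1] at hml; simp at hml; linarith
      · have hm2 : (2:ℝ) ≤ (m:ℝ) := by exact_mod_cast h2
        have : (1:ℝ) ≤ Real.logb 2 (m:ℝ) := by
          calc (1:ℝ) = Real.logb 2 2 := (Real.logb_self_eq_one (by norm_num : (1:ℝ) < 2)).symm
          _ ≤ Real.logb 2 (m:ℝ) := Real.logb_le_logb_of_le (by norm_num) (by norm_num) hm2
        linarith
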